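/- arXiv:2002.03101 — 11 statements merged into one kernel-verified Lean document; each statement's English description precedes it below -/
import Mathlib

section
/- Let R be a unital ring with involution * and nontrivial symmetric idempotent e, and let Δ : R → R be a *-reverse derivable map with Δ(e) = 0. Then Δ maps R₁₁ = eRe into R₁₁, i.e. for every x with x = exe one has Δ(x) = eΔ(x)e. -/
theorem delta_maps_R11_to_R11 {R : Type*} [Ring R]
    (σ : R → R)
    (hσadd : ∀ x y : R, σ (x + y) = σ x + σ y)
    (hσinv : ∀ x : R, σ (σ x) = x)
    (hσmul : ∀ x y : R, σ (x * y) = σ y * σ x)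
    (e : R) (he : e * e = e) (hes : σ e = e) (he0 : e ≠ 0) (he1 : e ≠ 1)
    (Δ : R → R)
    (hΔ : ∀ a b : R, Δ (a * b) = Δ b * σ a + σ b * Δ a)
    (hΔe : Δ e = 0) :
    ∀ x : R, x = e * x * e → Δ x = e * Δ x * e := by
  intro x hx
  have hex : e * x = x := by
    conv_lhs => rw [hx]
    rw [← mul_assoc, ← mul_assoc, he]; exact hx.symm
  have hxe : x * e = x := by
    conv_lhs => rw [hx]
    rw [mul_assoc, mul_assoc, he, ← mul_assoc]; exact hx.symm
  have h1 : Δ x = e * Δ x := by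
    conv_lhs => rw [← hxe]
    rw [hΔ, hΔe, hes, zero_mul, zero_add]
  have h2 : Δ x = Δ x * e := by
    conv_lhs => rw [← hex]
    rw [hΔ, hΔe, hes, mul_zero, add_zero]
  calc Δ x = e * Δ x := h1
    _ = e * (Δ x * e) := by rw [← h2]
    _ = e * Δ x * e := (mul_assoc _ _ _).symm
end

section
/- Let R be a unital ring with involution * and nontrivial symmetric idempotent e, and let Δ : R → R be a *-reverse derivable map with Δ(e) = 0. Then Δ maps R₂₂ = (1−e)R(1−e) into R₂₂, i.e. for every x with x = (1−e)x(1−e) one has Δ(x) = (1−e)Δ(x)(1−e). -/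
theorem delta_maps_R22_to_R22 {R : Type*} [Ring R]
    (σ : R → R)
    (hσadd : ∀ x y : R, σ (x + y) = σ x + σ y)
    (hσinv : ∀ x : R, σ (σ x) = x)
    (hσmul : ∀ x y : R, σ (x * y) = σ y * σ x)
    (e : R) (he : e * e = e) (hes : σ e = e) (he0 : e ≠ 0) (he1 : e ≠ 1)
    (Δ : R → R)
    (hΔ : ∀ a b : R, Δ (a * b) = Δ b * σ a + σ b * Δ a)
    (hΔe : Δ e = 0) :
    ∀ x : R, x = (1 - e) * x * (1 - e) → Δ x = (1 - e) * Δ x * (1 - e) := by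
  intro x hx
  have hσ0 : σ 0 = 0 := by
    have := hσadd 0 0; simpa using this
  have hΔ0 : Δ 0 = 0 := by
    have := hΔ 0 0
    simpa [hσ0] using this
  have hex : e * x = 0 := by
    rw [hx]
    simp [mul_sub, sub_mul, ← mul_assoc, he]
  have hxe : x * e = 0 := by
    rw [hx]
    simp [mul_sub, sub_mul, mul_assoc, he]
  have h1 : Δ x * e = 0 := by
    have := hΔ e x
    rw [hex, hΔ0, hes, hΔe] at this
    simpa using this.symm
  have h2 : e * Δ x = 0 := by
    have := hΔ x e
    rw [hxe, hΔ0, hes, hΔe] at this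
    simpa using this.symm
  simp [mul_sub, sub_mul, h1, h2]
end

section
/- Let R be a unital ring with involution * and nontrivial symmetric idempotent e, and let Δ : R → R be a *-reverse derivable map with Δ(e) = 0. Then Δ maps R₁₂ = eR(1−e) into R₂₁ = (1−e)Re: for every x with x = ex(1−e) one has Δ(x) = (1−e)Δ(x)e. -/
theorem delta_maps_R12_to_R21 {R : Type*} [Ring R]
    (σ : R → R)
    (hσadd : ∀ x y : R, σ (x + y) = σ x + σ y)
    (hσinv : ∀ x : R, σ (σ x) = x)
    (hσmul : ∀ x y : R, σ (x * y) = σ y * σ x)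
    (e : R) (he : e * e = e) (hes : σ e = e) (he0 : e ≠ 0) (he1 : e ≠ 1)
    (Δ : R → R)
    (hΔ : ∀ a b : R, Δ (a * b) = Δ b * σ a + σ b * Δ a)
    (hΔe : Δ e = 0) :
    ∀ x : R, x = e * x * (1 - e) → Δ x = (1 - e) * Δ x * e := by
  intro x hx
  have hs0 : σ 0 = 0 := by
    have := hσadd 0 0
    simp at this
    exact this
  have h0 : Δ 0 = 0 := by
    have := hΔ 0 0
    rw [hs0, mul_zero, zero_mul, add_zero, mul_zero] at this
    exact this
  have hex : e * x = x := by
    conv_rhs => rw [hx]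
    rw [hx]
    have h1e : (1 - e) * (1 - e) = 1 - e := by
      have : (1 - e) * (1 - e) = 1 - e - e + e * e := by noncomm_ring
      rw [this, he]; abel
    rw [← mul_assoc, ← mul_assoc, he, mul_assoc (e*x), h1e]
  have hxe : x * e = 0 := by
    rw [hx, mul_assoc, mul_assoc, sub_mul, one_mul, he, sub_self, mul_zero, mul_zero]
  -- Δx = Δx * e
  have h1 : Δ x = Δ x * e := by
    conv_lhs => rw [← hex]
    rw [hΔ, hes, hΔe, mul_zero, add_zero]
  -- e * Δx = 0
  have h2 : e * Δ x = 0 := by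
    have := hΔ x e
    rw [hxe, h0, hΔe, zero_mul, zero_add, hes] at this
    exact this.symm
  calc Δ x = Δ x * e := h1
    _ = (1 - e) * Δ x * e := by rw [sub_mul, one_mul, h2, sub_zero]
end

section
/- Let R be a unital ring with involution * and nontrivial symmetric idempotent e, and let Δ : R → R be a *-reverse derivable map with Δ(e) = 0. Then Δ maps R₂₁ = (1−e)Re into R₁₂ = eR(1−e): for every x with x = (1−e)xe one has Δ(x) = eΔ(x)(1−e). -/
theorem delta_maps_R21_to_R12 {R : Type*} [Ring R]
    (σ : R → R)
    (hσadd : ∀ x y : R, σ (x + y) = σ x + σ y)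
    (hσinv : ∀ x : R, σ (σ x) = x)
    (hσmul : ∀ x y : R, σ (x * y) = σ y * σ x)
    (e : R) (he : e * e = e) (hes : σ e = e) (he0 : e ≠ 0) (he1 : e ≠ 1)
    (Δ : R → R)
    (hΔ : ∀ a b : R, Δ (a * b) = Δ b * σ a + σ b * Δ a)
    (hΔe : Δ e = 0) :
    ∀ x : R, x = (1 - e) * x * e → Δ x = e * Δ x * (1 - e) := by
  have hσ0 : σ 0 = 0 := by
    have h := hσadd 0 0
    simp only [add_zero] at h
    exact (left_eq_add.mp h)
  have hΔ0 : Δ 0 = 0 := by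
    have h := hΔ 0 0
    simp [hσ0] at h
    exact h
  intro x hx
  have hxe : x * e = x := by
    rw [hx]; rw [mul_assoc, mul_assoc, he, ← mul_assoc]
  have hex : e * x = 0 := by
    rw [hx]
    have : e * (1 - e) = 0 := by rw [mul_sub, mul_one, he, sub_self]
    rw [← mul_assoc, ← mul_assoc, this, zero_mul, zero_mul]
  have h1 : Δ x = e * Δ x := by
    conv_lhs => rw [← hxe]
    rw [hΔ x e, hΔe, zero_mul, hes, zero_add]
  have h2 : Δ x * e = 0 := by
    have h := hΔ e x
    rw [hex, hΔ0, hes, hΔe, mul_zero, add_zero] at h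
    exact h.symm
  rw [mul_sub, mul_one, ← h1, h2, sub_zero]
end

section
/- Let R be a unital ring with involution * containing a nontrivial symmetric idempotent e, satisfying: (M1) xR = 0 implies x = 0. Let Δ : R → R be a *-reverse derivable map with Δ(e) = 0. Then for all x₁₁ ∈ eRe and x₂₁ ∈ (1−e)Re, Δ(x₁₁ + x₂₁) = Δ(x₁₁) + Δ(x₂₁). -/
theorem delta_additive_R11_R21 {R : Type*} [Ring R]
    (σ : R → R)
    (hσadd : ∀ x y : R, σ (x + y) = σ x + σ y)
    (hσinv : ∀ x : R, σ (σ x) = x)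
    (hσmul : ∀ x y : R, σ (x * y) = σ y * σ x)
    (e : R) (he : e * e = e) (hes : σ e = e) (he0 : e ≠ 0) (he1 : e ≠ 1)
    (hM1 : ∀ x : R, (∀ r : R, x * r = 0) → x = 0)
    (Δ : R → R)
    (hΔ : ∀ a b : R, Δ (a * b) = Δ b * σ a + σ b * Δ a)
    (hΔe : Δ e = 0) :
    ∀ x₁₁ x₂₁ : R, x₁₁ = e * x₁₁ * e → x₂₁ = (1 - e) * x₂₁ * e →
      Δ (x₁₁ + x₂₁) = Δ x₁₁ + Δ x₂₁ := by
  intro x₁₁ x₂₁ h11 h21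
  set f : R := 1 - e with hf
  -- basic facts about σ
  have hσ0 : σ 0 = 0 := by
    have h := hσadd 0 0
    rw [add_zero] at h
    have := congrArg (· - σ 0) h
    simpa using this.symm
  have hσ1 : σ 1 = 1 := by
    have h := hσmul (σ 1) 1
    rw [mul_one, hσinv] at h
    simpa using h.symm
  have hσneg : ∀ x : R, σ (-x) = - σ x := by
    intro x
    have h := hσadd x (-x)
    rw [add_neg_cancel, hσ0] at h
    exact eq_neg_of_add_eq_zero_right h.symm
  have hσf : σ f = f := by
    rw [hf, sub_eq_add_neg, hσadd, hσ1, hσneg, hes, ← sub_eq_add_neg]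
  -- Δ 0 = 0
  have hΔ0 : Δ 0 = 0 := by
    have h := hΔ 0 0
    rw [mul_zero, hσ0, mul_zero, zero_mul, add_zero] at h
    exact h
  -- idempotent facts
  have hef : e * f = 0 := by rw [hf, mul_sub, mul_one, he, sub_self]
  have hfe : f * e = 0 := by rw [hf, sub_mul, one_mul, he, sub_self]
  have hff : f * f = f := by rw [hf, sub_mul, one_mul, mul_sub, mul_one, he, sub_self, sub_zero]
  -- Δ f = 0
  have hΔf : Δ f = 0 := by
    have hDe : Δ f * e = 0 := by
      have h := hΔ e f
      rw [hef, hΔ0, hes, hΔe, mul_zero, add_zero] at h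
      exact h.symm
    have heD : e * Δ f = 0 := by
      have h := hΔ f e
      rw [hfe, hΔ0, hσf, hΔe, zero_mul, hes, zero_add] at h
      exact h.symm
    have hsum : Δ f = Δ f * f + f * Δ f := by
      have h := hΔ f f
      rw [hff, hσf] at h
      exact h
    have hDf : Δ f * f = Δ f := by
      have : Δ f * (e + f) = Δ f := by
        rw [hf, add_sub_cancel, mul_one]
      rw [mul_add, hDe, zero_add] at this
      exact this
    have hfD : f * Δ f = 0 := by
      rw [hDf] at hsum
      have := congrArg (· - Δ f) hsum
      simpa using this.symm
    have : (e + f) * Δ f = Δ f := by rw [hf, add_sub_cancel, one_mul]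
    rw [add_mul, heD, hfD, add_zero] at this
    exact this.symm
  -- Peirce multiplication facts
  have he11 : e * x₁₁ = x₁₁ := by
    rw [h11, ← mul_assoc, ← mul_assoc, he]
  have hf11 : f * x₁₁ = 0 := by
    rw [h11, ← mul_assoc, ← mul_assoc]
    rw [hf, sub_mul, one_mul, he, sub_self, zero_mul, zero_mul]
  have he21 : e * x₂₁ = 0 := by
    rw [h21, ← mul_assoc, ← mul_assoc, mul_sub, mul_one, he, sub_self, zero_mul, zero_mul]
  have hf21 : f * x₂₁ = x₂₁ := by
    have : f * x₂₁ = (1 - e) * x₂₁ := by rw [hf]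
    rw [this, sub_mul, one_mul, he21, sub_zero]
  -- main computation
  have hea : e * (x₁₁ + x₂₁) = x₁₁ := by rw [mul_add, he11, he21, add_zero]
  have hfa : f * (x₁₁ + x₂₁) = x₂₁ := by rw [mul_add, hf11, hf21, zero_add]
  have A1 : Δ (x₁₁ + x₂₁) * e = Δ x₁₁ := by
    have h := hΔ e (x₁₁ + x₂₁)
    rw [hea, hes, hΔe, mul_zero, add_zero] at h
    exact h.symm
  have B1 : Δ (x₁₁ + x₂₁) * f = Δ x₂₁ := by
    have h := hΔ f (x₁₁ + x₂₁)
    rw [hfa, hσf, hΔf, mul_zero, add_zero] at h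
    exact h.symm
  have : Δ (x₁₁ + x₂₁) * (e + f) = Δ (x₁₁ + x₂₁) := by
    rw [hf, add_sub_cancel, mul_one]
  rw [mul_add, A1, B1] at this
  exact this.symm
end

section
/- Let R be a unital ring with involution * containing a nontrivial symmetric idempotent e, satisfying: (M2) eRx = 0 implies x = 0. Let Δ : R → R be a *-reverse derivable map with Δ(e) = 0. Then for all x₁₁ ∈ eRe and x₁₂ ∈ eR(1−e), Δ(x₁₁ + x₁₂) = Δ(x₁₁) + Δ(x₁₂). -/
theorem delta_additive_R11_R12 {R : Type*} [Ring R]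
    (σ : R → R)
    (hσadd : ∀ x y : R, σ (x + y) = σ x + σ y)
    (hσinv : ∀ x : R, σ (σ x) = x)
    (hσmul : ∀ x y : R, σ (x * y) = σ y * σ x)
    (e : R) (he : e * e = e) (hes : σ e = e) (he0 : e ≠ 0) (he1 : e ≠ 1)
    (hM2 : ∀ x : R, (∀ r : R, e * r * x = 0) → x = 0)
    (Δ : R → R)
    (hΔ : ∀ a b : R, Δ (a * b) = Δ b * σ a + σ b * Δ a)
    (hΔe : Δ e = 0) :
    ∀ x₁₁ x₁₂ : R, x₁₁ = e * x₁₁ * e → x₁₂ = e * x₁₂ * (1 - e) →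
      Δ (x₁₁ + x₁₂) = Δ x₁₁ + Δ x₁₂ := by
  intro x₁₁ x₁₂ hx₁₁ hx₁₂
  -- basic facts about σ and Δ at 0 and 1
  have hσ0 : σ 0 = 0 := by
    have h := hσadd 0 0
    rw [add_zero] at h
    exact (right_eq_add.mp h)
  have hΔ0 : Δ 0 = 0 := by
    have h := hΔ 0 0
    rw [mul_zero, hσ0, mul_zero, zero_mul, add_zero] at h
    exact h
  have hσ1x : ∀ x : R, σ 1 * x = x := by
    intro x
    have h := hσmul (σ x) 1
    rw [mul_one, hσinv] at h
    exact h.symm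
  have hσ1 : σ 1 = 1 := by
    have := hσ1x 1; rwa [mul_one] at this
  have hσsub : σ (1 - e) = 1 - e := by
    have h := hσadd (1 - e) e
    rw [sub_add_cancel, hσ1, hes] at h
    exact eq_sub_of_add_eq h.symm
  -- Peirce facts
  have A : x₁₁ * e = x₁₁ := by
    conv_lhs => rw [hx₁₁]
    rw [mul_assoc, he]
    exact hx₁₁.symm
  have B : x₁₁ * (1 - e) = 0 := by
    rw [mul_sub, mul_one, A, sub_self]
  have C : x₁₂ * e = 0 := by
    conv_lhs => rw [hx₁₂]
    rw [mul_assoc, sub_mul, one_mul, he, sub_self, mul_zero]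
  have D : x₁₂ * (1 - e) = x₁₂ := by
    rw [mul_sub, mul_one, C, sub_zero]
  -- the six key equations
  have h1 : e * Δ (x₁₁ + x₁₂) = Δ x₁₁ := by
    have h := hΔ (x₁₁ + x₁₂) e
    rw [add_mul, A, C, add_zero, hΔe, zero_mul, zero_add, hes] at h
    exact h.symm
  have h2 : e * Δ x₁₂ = 0 := by
    have h := hΔ x₁₂ e
    rw [C, hΔ0, hΔe, zero_mul, zero_add, hes] at h
    exact h.symm
  have h3 : e * Δ x₁₁ = Δ x₁₁ := by
    have h := hΔ x₁₁ e
    rw [A, hΔe, zero_mul, zero_add, hes] at h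
    exact h.symm
  have h4 : Δ x₁₂ = Δ (1 - e) * (σ x₁₁ + σ x₁₂) + (1 - e) * Δ (x₁₁ + x₁₂) := by
    have h := hΔ (x₁₁ + x₁₂) (1 - e)
    rw [add_mul, B, D, zero_add, hσsub, hσadd] at h
    exact h
  have h5 : Δ x₁₂ = Δ (1 - e) * σ x₁₂ + (1 - e) * Δ x₁₂ := by
    have h := hΔ x₁₂ (1 - e)
    rw [D, hσsub] at h
    exact h
  have h6 : (0 : R) = Δ (1 - e) * σ x₁₁ + (1 - e) * Δ x₁₁ := by
    have h := hΔ x₁₁ (1 - e)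
    rw [B, hΔ0, hσsub] at h
    exact h
  linear_combination (norm := noncomm_ring) h1 - h4 + h5 + h6 - h3 - h2
end

section
/- Let R be a unital ring with involution * containing a nontrivial symmetric idempotent e, satisfying: (M2) eRx = 0 implies x = 0. Let Δ : R → R be a *-reverse derivable map with Δ(e) = 0. Then Δ is additive on eR(1−e): for all x₁₂, y₁₂ ∈ eR(1−e), Δ(x₁₂ + y₁₂) = Δ(x₁₂) + Δ(y₁₂). -/
theorem delta_additive_on_R12 {R : Type*} [Ring R]
    (σ : R → R)
    (hσadd : ∀ x y : R, σ (x + y) = σ x + σ y)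
    (hσinv : ∀ x : R, σ (σ x) = x)
    (hσmul : ∀ x y : R, σ (x * y) = σ y * σ x)
    (e : R) (he : e * e = e) (hes : σ e = e) (he0 : e ≠ 0) (he1 : e ≠ 1)
    (hM2 : ∀ x : R, (∀ r : R, e * r * x = 0) → x = 0)
    (Δ : R → R)
    (hΔ : ∀ a b : R, Δ (a * b) = Δ b * σ a + σ b * Δ a)
    (hΔe : Δ e = 0) :
    ∀ x₁₂ y₁₂ : R, x₁₂ = e * x₁₂ * (1 - e) → y₁₂ = e * y₁₂ * (1 - e) →
      Δ (x₁₂ + y₁₂) = Δ x₁₂ + Δ y₁₂ := by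
  intro x y hx hy
  -- basic σ facts
  have hσ1 : σ 1 = 1 := by
    have h := hσmul (σ 1) 1
    rw [mul_one, hσinv] at h
    rw [mul_one] at h
    exact h.symm
  have hσ0 : σ 0 = 0 := by
    have h := hσadd 0 0
    rw [add_zero] at h
    exact right_eq_add.mp h
  have hΔ0 : Δ 0 = 0 := by
    have h := hΔ 0 0
    rw [mul_zero, hσ0, mul_zero, zero_mul, add_zero] at h
    exact h
  have hσ1e : σ (1 - e) = 1 - e := by
    have h := hσadd (1 - e) e
    rw [sub_add_cancel, hσ1, hes] at h
    exact eq_sub_of_add_eq h.symm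
  -- idempotent component facts
  have he1e : e * (1 - e) = 0 := by rw [mul_sub, mul_one, he, sub_self]
  have h1ee : (1 - e) * e = 0 := by rw [sub_mul, one_mul, he, sub_self]
  have h1e1e : (1 - e) * (1 - e) = 1 - e := by
    rw [mul_sub, mul_one, sub_mul, one_mul, he, sub_self, sub_zero]
  -- facts about elements of eR(1-e)
  have fact1 : ∀ z : R, z = e * z * (1 - e) → e * z = z := by
    intro z hz
    conv_lhs => rw [hz]
    rw [← mul_assoc, ← mul_assoc, he, ← hz]
  have fact2 : ∀ z : R, z = e * z * (1 - e) → z * e = 0 := by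
    intro z hz
    rw [hz, mul_assoc, h1ee, mul_zero]
  have fact3 : ∀ z : R, z = e * z * (1 - e) → z * (1 - e) = z := by
    intro z hz
    rw [mul_sub, mul_one, fact2 z hz, sub_zero]
  have fact4 : ∀ z : R, z = e * z * (1 - e) → (1 - e) * z = 0 := by
    intro z hz
    rw [sub_mul, one_mul, fact1 z hz, sub_self]
  have fact5 : ∀ z : R, z = e * z * (1 - e) → e * σ z = 0 := by
    intro z hz
    have h := hσmul z e
    rw [fact2 z hz, hσ0, hes] at h
    exact h.symm
  have fact6 : ∀ z : R, z = e * z * (1 - e) → σ z * e = σ z := by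
    intro z hz
    have h := hσmul (1 - e) z
    rw [fact4 z hz, hσ0, hσ1e] at h
    have h2 : σ z * (1 - e) = 0 := h.symm
    rw [mul_sub, mul_one, sub_eq_zero] at h2
    exact h2.symm
  have fact7 : ∀ z : R, z = e * z * (1 - e) → Δ z * e = Δ z := by
    intro z hz
    have h := hΔ e z
    rw [fact1 z hz, hes, hΔe, mul_zero, add_zero] at h
    exact h.symm
  -- Δ(1-e) = 0
  have hde : Δ (1 - e) * e = 0 := by
    have h := hΔ e (1 - e)
    rw [he1e, hΔ0, hes, hΔe, mul_zero, add_zero] at h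
    exact h.symm
  have hed : e * Δ (1 - e) = 0 := by
    have h := hΔ (1 - e) e
    rw [h1ee, hΔ0, hΔe, zero_mul, zero_add, hes] at h
    exact h.symm
  have hd0 : Δ (1 - e) = 0 := by
    have h := hΔ (1 - e) (1 - e)
    rw [h1e1e, hσ1e, mul_sub, mul_one, hde, sub_zero, sub_mul, one_mul, hed,
      sub_zero] at h
    exact right_eq_add.mp h
  have fact8 : ∀ z : R, z = e * z * (1 - e) → e * Δ z = 0 := by
    intro z hz
    have h := hΔ z (1 - e)
    rw [fact3 z hz, hd0, zero_mul, zero_add, hσ1e, sub_mul, one_mul] at h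
    exact sub_eq_self.mp h.symm
  -- Δ(e+z) = Δ z
  have fact9 : ∀ z : R, z = e * z * (1 - e) → Δ (e + z) = Δ z := by
    intro z hz
    have ha : (e + z) * e = e := by rw [add_mul, he, fact2 z hz, add_zero]
    have hb : e * Δ (e + z) = 0 := by
      have h := hΔ (e + z) e
      rw [ha, hΔe, zero_mul, zero_add, hes] at h
      exact h.symm
    have hc : (e + z) * (1 - e) = z := by
      rw [add_mul, he1e, fact3 z hz, zero_add]
    have h := hΔ (e + z) (1 - e)
    rw [hc, hd0, zero_mul, zero_add, hσ1e, sub_mul, one_mul, hb, sub_zero] at h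
    exact h.symm
  -- facts about p := Δ(x + (1-e))
  have hpe : Δ (x + (1 - e)) * e = Δ x := by
    have h1 : e * (x + (1 - e)) = x := by
      rw [mul_add, he1e, add_zero, fact1 x hx]
    have h := hΔ e (x + (1 - e))
    rw [h1, hes, hΔe, mul_zero, add_zero] at h
    exact h.symm
  have hep : e * Δ (x + (1 - e)) = 0 := by
    have h1 : (x + (1 - e)) * e = 0 := by
      rw [add_mul, fact2 x hx, h1ee, add_zero]
    have h := hΔ (x + (1 - e)) e
    rw [h1, hΔ0, hΔe, zero_mul, zero_add, hes] at h
    exact h.symm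
  have hσp : σ (x + (1 - e)) = σ x + (1 - e) := by rw [hσadd, hσ1e]
  have hxx : x * x = 0 := by
    calc x * x = x * (e * x) := by rw [fact1 x hx]
    _ = (x * e) * x := (mul_assoc x e x).symm
    _ = 0 * x := by rw [fact2 x hx]
    _ = 0 := zero_mul x
  have hidem : (x + (1 - e)) * (x + (1 - e)) = x + (1 - e) := by
    rw [mul_add, add_mul, add_mul, hxx, fact4 x hx, fact3 x hx, h1e1e,
      zero_add, zero_add]
  have hσxσy : σ x * σ y = 0 := by
    rw [← fact6 x hx, mul_assoc, fact5 y hy, mul_zero]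
  have hΔxσy : Δ x * σ y = 0 := by
    rw [← fact7 x hx, mul_assoc, fact5 y hy, mul_zero]
  have hσxp : σ x * Δ (x + (1 - e)) = 0 := by
    rw [← fact6 x hx, mul_assoc, hep, mul_zero]
  have hA := hΔ (x + (1 - e)) (x + (1 - e))
  rw [hidem, hσp, mul_add, add_mul, hσxp, zero_add, mul_sub, mul_one, hpe,
    sub_mul, one_mul, hep, sub_zero] at hA
  have hpσy : Δ (x + (1 - e)) * σ y = 0 := by
    have h : Δ (x + (1 - e)) * σ y =
        (Δ (x + (1 - e)) * σ x + (Δ (x + (1 - e)) - Δ x) + Δ (x + (1 - e))) * σ y := by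
      conv_lhs => rw [hA]
    rw [add_mul, add_mul, sub_mul, mul_assoc, hσxσy, mul_zero, hΔxσy,
      sub_zero, zero_add] at h
    exact right_eq_add.mp h
  have hyx : y * x = 0 := by
    rw [← fact1 x hx, ← mul_assoc, fact2 y hy, zero_mul]
  have hfac : (e + y) * (x + (1 - e)) = x + y := by
    rw [mul_add, add_mul, add_mul, fact1 x hx, hyx, add_zero, he1e,
      fact3 y hy, zero_add]
  have hσxΔy : σ x * Δ y = 0 := by
    rw [← fact6 x hx, mul_assoc, fact8 y hy, mul_zero]
  have h := hΔ (e + y) (x + (1 - e))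
  rw [hfac, hσadd e y, hes, hσp, fact9 y hy, mul_add, add_mul, hpe, hpσy,
    add_zero, hσxΔy, sub_mul, one_mul, fact8 y hy, sub_zero, zero_add] at h
  exact h
end

section
/- Let R be a unital ring with involution * containing a nontrivial symmetric idempotent e, satisfying: (M1) xR = 0 implies x = 0. Let Δ : R → R be a *-reverse derivable map with Δ(e) = 0. Then Δ is additive on (1−e)Re: for all x₂₁, y₂₁ ∈ (1−e)Re, Δ(x₂₁ + y₂₁) = Δ(x₂₁) + Δ(y₂₁). -/
theorem delta_additive_on_R21 {R : Type*} [Ring R]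
    (σ : R → R)
    (hσadd : ∀ x y : R, σ (x + y) = σ x + σ y)
    (hσinv : ∀ x : R, σ (σ x) = x)
    (hσmul : ∀ x y : R, σ (x * y) = σ y * σ x)
    (e : R) (he : e * e = e) (hes : σ e = e) (he0 : e ≠ 0) (he1 : e ≠ 1)
    (hM1 : ∀ x : R, (∀ r : R, x * r = 0) → x = 0)
    (Δ : R → R)
    (hΔ : ∀ a b : R, Δ (a * b) = Δ b * σ a + σ b * Δ a)
    (hΔe : Δ e = 0) :
    ∀ x₂₁ y₂₁ : R, x₂₁ = (1 - e) * x₂₁ * e → y₂₁ = (1 - e) * y₂₁ * e →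
      Δ (x₂₁ + y₂₁) = Δ x₂₁ + Δ y₂₁ := by
  intro x y hx hy
  -- basic σ facts
  have hσ0 : σ 0 = 0 := by
    have h := hσadd 0 0
    simp only [add_zero] at h
    exact (left_eq_add.mp h)
  have hσ1 : σ 1 = 1 := by
    have h := hσmul (σ 1) 1
    rw [mul_one, hσinv] at h
    simpa using h.symm
  have hσe2 : σ (1 - e) = 1 - e := by
    have h := hσadd e (1 - e)
    rw [add_sub_cancel, hσ1, hes] at h
    exact (eq_sub_of_add_eq' h.symm)
  -- Δ 0 = 0
  have hΔ0 : Δ 0 = 0 := by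
    have h := hΔ 0 0
    simpa [hσ0] using h
  -- element facts
  have hxe : x * e = x := by
    conv_lhs => rw [hx]
    rw [mul_assoc, he, ← hx]
  have hex : e * x = 0 := by
    conv_lhs => rw [hx]
    rw [← mul_assoc, ← mul_assoc, mul_sub, mul_one, he, sub_self, zero_mul, zero_mul]
  have hye : y * e = y := by
    conv_lhs => rw [hy]
    rw [mul_assoc, he, ← hy]
  have hey : e * y = 0 := by
    conv_lhs => rw [hy]
    rw [← mul_assoc, ← mul_assoc, mul_sub, mul_one, he, sub_self, zero_mul, zero_mul]
  have hxe2 : x * (1 - e) = 0 := by rw [mul_sub, mul_one, hxe, sub_self]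
  have he2x : (1 - e) * x = x := by rw [sub_mul, one_mul, hex, sub_zero]
  have hye2 : y * (1 - e) = 0 := by rw [mul_sub, mul_one, hye, sub_self]
  have he2y : (1 - e) * y = y := by rw [sub_mul, one_mul, hey, sub_zero]
  have he2e : (1 - e) * e = 0 := by rw [sub_mul, one_mul, he, sub_self]
  have hee2 : e * (1 - e) = 0 := by rw [mul_sub, mul_one, he, sub_self]
  have he2e2 : (1 - e) * (1 - e) = 1 - e := by
    rw [mul_sub, mul_one, he2e, sub_zero]
  have hxy : x * y = 0 := by
    conv_lhs => rw [hy]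
    rw [← mul_assoc, ← mul_assoc, hxe2, zero_mul, zero_mul]
  -- Δ (1 - e) = 0
  have hΔe2 : Δ (1 - e) = 0 := by
    have h1 : Δ (1 - e) * e = 0 := by
      have h := hΔ e (1 - e)
      rw [hee2, hΔ0, hes, hΔe, mul_zero, add_zero] at h
      exact h.symm
    have h2 : e * Δ (1 - e) = 0 := by
      have h := hΔ (1 - e) e
      rw [he2e, hΔ0, hσe2, hΔe, zero_mul, zero_add, hes] at h
      exact h.symm
    have h := hΔ (1 - e) (1 - e)
    rw [he2e2, hσe2, mul_sub, mul_one, h1, sub_zero, sub_mul, one_mul, h2, sub_zero] at h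
    exact (left_eq_add.mp h)
  -- component facts about Δ
  have F1 : Δ y * e = 0 := by
    have h := hΔ e y
    rw [hey, hΔ0, hes, hΔe, mul_zero, add_zero] at h
    exact h.symm
  have F2 : e * Δ x = Δ x := by
    have h := hΔ x e
    rw [hxe, hΔe, zero_mul, zero_add, hes] at h
    exact h.symm
  have F3 : Δ y * σ x + σ y * Δ x = 0 := by
    have h := hΔ x y
    rw [hxy, hΔ0] at h
    exact h.symm
  -- Lemma A : Δ (e + y) = Δ y
  have A1 : Δ (e + y) * e = 0 := by
    have h := hΔ e (e + y)
    rw [mul_add, he, hey, add_zero, hΔe, hes, mul_zero, add_zero] at h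
    exact h.symm
  have A2 : Δ (e + y) * (1 - e) = Δ y := by
    have h := hΔ (1 - e) (e + y)
    rw [mul_add, he2e, he2y, zero_add, hσe2, hΔe2, mul_zero, add_zero] at h
    exact h.symm
  have lemA : Δ (e + y) = Δ y := by
    have : Δ (e + y) * (e + (1 - e)) = Δ y := by
      rw [mul_add, A1, A2, zero_add]
    simpa using this
  -- Lemma B : Δ ((1 - e) + x) = Δ x
  have B1 : e * Δ ((1 - e) + x) = Δ x := by
    have h := hΔ ((1 - e) + x) e
    rw [add_mul, he2e, hxe, zero_add, hΔe, zero_mul, zero_add, hes] at h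
    exact h.symm
  have B2 : (1 - e) * Δ ((1 - e) + x) = 0 := by
    have h := hΔ ((1 - e) + x) (1 - e)
    rw [add_mul, he2e2, hxe2, add_zero, hΔe2, zero_mul, zero_add, hσe2] at h
    exact h.symm
  have lemB : Δ ((1 - e) + x) = Δ x := by
    have : (e + (1 - e)) * Δ ((1 - e) + x) = Δ x := by
      rw [add_mul, B1, B2, add_zero]
    simpa using this
  -- Main computation
  have hprod : ((1 - e) + x) * (e + y) = x + y := by
    rw [add_mul, mul_add, mul_add, he2e, he2y, hxe, hxy, add_zero, zero_add]
    abel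
  have h := hΔ ((1 - e) + x) (e + y)
  rw [hprod, lemA, lemB, hσadd, hσadd, hσe2, hes] at h
  rw [h, mul_add, add_mul, mul_sub, mul_one, F1, sub_zero, F2]
  -- goal now : Δ y + Δ y * σ x + (Δ x + σ y * Δ x) = Δ x + Δ y
  have hre : Δ y + Δ y * σ x + (Δ x + σ y * Δ x)
      = Δ x + Δ y + (Δ y * σ x + σ y * Δ x) := by abel
  rw [hre, F3, add_zero]
end

section
/- Let R be a unital ring with involution * containing a nontrivial symmetric idempotent e, satisfying: (M1) xR = 0 implies x = 0, and (M3) exe·R·(1−e) = 0 implies exe = 0. Let Δ : R → R be a *-reverse derivable map with Δ(e) = 0. Then Δ is additive on eRe: for all x₁₁, y₁₁ ∈ eRe, Δ(x₁₁ + y₁₁) = Δ(x₁₁) + Δ(y₁₁). -/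
theorem delta_additive_on_R11 {R : Type*} [Ring R]
    (σ : R → R)
    (hσadd : ∀ x y : R, σ (x + y) = σ x + σ y)
    (hσinv : ∀ x : R, σ (σ x) = x)
    (hσmul : ∀ x y : R, σ (x * y) = σ y * σ x)
    (e : R) (he : e * e = e) (hes : σ e = e) (he0 : e ≠ 0) (he1 : e ≠ 1)
    (hM1 : ∀ x : R, (∀ r : R, x * r = 0) → x = 0)
    (hM3 : ∀ x : R, (∀ r : R, e * x * e * r * (1 - e) = 0) → e * x * e = 0)
    (Δ : R → R)
    (hΔ : ∀ a b : R, Δ (a * b) = Δ b * σ a + σ b * Δ a)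
    (hΔe : Δ e = 0) :
    ∀ x₁₁ y₁₁ : R, x₁₁ = e * x₁₁ * e → y₁₁ = e * y₁₁ * e →
      Δ (x₁₁ + y₁₁) = Δ x₁₁ + Δ y₁₁ := by
  intro x y hx hy
  -- basic σ facts
  have hσ0 : σ 0 = 0 := by
    have h := hσadd 0 0
    rw [add_zero] at h
    exact left_eq_add.mp h
  have hσ1 : σ 1 = 1 := by
    have h := hσmul (σ 1) 1
    rw [hσinv] at h
    rw [mul_one] at h
    rw [hσinv] at h
    exact h.symm
  have hσneg : ∀ z : R, σ (-z) = - σ z := by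
    intro z
    have h := hσadd z (-z)
    rw [add_neg_cancel, hσ0] at h
    exact eq_neg_of_add_eq_zero_right h.symm
  have hσf : σ (1 - e) = 1 - e := by
    rw [sub_eq_add_neg, hσadd, hσ1, hσneg, hes, ← sub_eq_add_neg]
  -- idempotent facts
  have hef : e * (1 - e) = 0 := by rw [mul_sub, mul_one, he, sub_self]
  have hfe : (1 - e) * e = 0 := by rw [sub_mul, one_mul, he, sub_self]
  have hff : (1 - e) * (1 - e) = 1 - e := by
    rw [mul_sub, mul_one, hfe, sub_zero]
  -- Δ basic facts
  have hΔ0 : Δ 0 = 0 := by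
    have h := hΔ 0 0
    rw [mul_zero, hσ0, mul_zero, zero_mul, add_zero] at h
    exact h
  have hΔf : Δ (1 - e) = 0 := by
    have h1 : Δ (1 - e) * e = 0 := by
      have h := hΔ e (1 - e)
      rw [hef, hΔ0, hes, hΔe, mul_zero, add_zero] at h
      exact h.symm
    have h2 : e * Δ (1 - e) = 0 := by
      have h := hΔ (1 - e) e
      rw [hfe, hΔ0, hΔe, zero_mul, zero_add, hes] at h
      exact h.symm
    have h := hΔ (1 - e) (1 - e)
    rw [hff, hσf] at h
    have e1 : Δ (1 - e) * (1 - e) = Δ (1 - e) := by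
      rw [mul_sub, mul_one, h1, sub_zero]
    have e2 : (1 - e) * Δ (1 - e) = Δ (1 - e) := by
      rw [sub_mul, one_mul, h2, sub_zero]
    rw [e1, e2] at h
    exact left_eq_add.mp h
  -- corner lemmas for Δ
  have hDre : ∀ z : R, e * z = z → Δ z * e = Δ z := by
    intro z hz
    have h := hΔ e z
    rw [hz, hes, hΔe, mul_zero, add_zero] at h
    exact h.symm
  have hDle : ∀ z : R, z * e = z → e * Δ z = Δ z := by
    intro z hz
    have h := hΔ z e
    rw [hz, hΔe, zero_mul, zero_add, hes] at h
    exact h.symm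
  have hDrf : ∀ z : R, (1 - e) * z = z → Δ z * (1 - e) = Δ z := by
    intro z hz
    have h := hΔ (1 - e) z
    rw [hz, hσf, hΔf, mul_zero, add_zero] at h
    exact h.symm
  have hDlf : ∀ z : R, z * (1 - e) = z → (1 - e) * Δ z = Δ z := by
    intro z hz
    have h := hΔ z (1 - e)
    rw [hz, hσf, hΔf, zero_mul, zero_add] at h
    exact h.symm
  -- corner membership facts for R21 elements
  have corner : ∀ a : R, a = (1 - e) * a * e →
      (1 - e) * a = a ∧ a * e = a ∧ e * a = 0 ∧ a * (1 - e) = 0 := by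
    intro a ha
    refine ⟨?_, ?_, ?_, ?_⟩
    · rw [ha]
      calc (1 - e) * ((1 - e) * a * e) = ((1 - e) * (1 - e)) * a * e := by noncomm_ring
        _ = (1 - e) * a * e := by rw [hff]
    · rw [ha]
      calc ((1 - e) * a * e) * e = (1 - e) * a * (e * e) := by noncomm_ring
        _ = (1 - e) * a * e := by rw [he]
    · rw [ha]
      calc e * ((1 - e) * a * e) = (e * (1 - e)) * (a * e) := by noncomm_ring
        _ = 0 := by rw [hef, zero_mul]
    · rw [ha]
      calc ((1 - e) * a * e) * (1 - e) = ((1 - e) * a) * (e * (1 - e)) := by noncomm_ring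
        _ = 0 := by rw [hef, mul_zero]
  -- Lemma B' : Δ((1-e)+a) = Δ a for a ∈ R21
  have lemB' : ∀ a : R, a = (1 - e) * a * e → Δ ((1 - e) + a) = Δ a := by
    intro a ha
    obtain ⟨hfa, hae, hea, haf⟩ := corner a ha
    have hgf : ((1 - e) + a) * (1 - e) = (1 - e) := by rw [add_mul, hff, haf, add_zero]
    have h1 := hΔ ((1 - e) + a) (1 - e)
    rw [hgf, hΔf, zero_mul, zero_add, hσf] at h1
    -- h1 : 0 = (1-e) * Δ ((1-e)+a)
    have heg : e * Δ ((1 - e) + a) = Δ ((1 - e) + a) := by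
      have h2 := h1.symm
      rw [sub_mul, one_mul] at h2
      exact (sub_eq_zero.mp h2).symm
    have heΔa : e * Δ a = Δ a := hDle a hae
    have stepL : ∀ c : R, e * c = c → σ c * (Δ ((1 - e) + a) - Δ a) = 0 := by
      intro c hc
      have hfc : (1 - e) * c = 0 := by rw [sub_mul, one_mul, hc, sub_self]
      have hgc : ((1 - e) + a) * c = a * c := by rw [add_mul, hfc, zero_add]
      have hΔce : Δ c * e = Δ c := hDre c hc
      have hΔcf : Δ c * (1 - e) = 0 := by rw [mul_sub, mul_one, hΔce, sub_self]
      have hmid : Δ (a * c) = Δ c * σ a + σ c * Δ ((1 - e) + a) := by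
        have h := hΔ ((1 - e) + a) c
        rw [hgc, hσadd, hσf, mul_add, hΔcf, zero_add] at h
        exact h
      have h2 := hΔ a c
      have h3 : Δ c * σ a + σ c * Δ ((1 - e) + a) = Δ c * σ a + σ c * Δ a :=
        hmid.symm.trans h2
      have h4 := add_left_cancel h3
      rw [mul_sub, h4, sub_self]
    have hV : e * (Δ ((1 - e) + a) - Δ a) = Δ ((1 - e) + a) - Δ a := by
      rw [mul_sub, heg, heΔa]
    have hrV : ∀ r : R, r * (Δ ((1 - e) + a) - Δ a) = 0 := by
      intro r
      have ht : e * σ (r * e) = σ (r * e) := by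
        have h := hσmul (r * e) e
        rw [mul_assoc, he, hes] at h
        exact h.symm
      have h5 := stepL (σ (r * e)) ht
      rw [hσinv] at h5
      calc r * (Δ ((1 - e) + a) - Δ a)
          = (r * e) * (Δ ((1 - e) + a) - Δ a) := by
            conv_lhs => rw [← hV]
            rw [← mul_assoc]
        _ = 0 := h5
    have hσV : ∀ s : R, σ (Δ ((1 - e) + a) - Δ a) * s = 0 := by
      intro s
      have h := congrArg σ (hrV (σ s))
      rw [hσmul, hσinv, hσ0] at h
      exact h
    have h6 := hM1 _ hσV
    have h7 := congrArg σ h6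
    rw [hσinv, hσ0] at h7
    exact sub_eq_zero.mp h7
  -- Lemma B : Δ(e+b) = Δ b for b ∈ R21
  have lemB : ∀ b : R, b = (1 - e) * b * e → Δ (e + b) = Δ b := by
    intro b hb
    obtain ⟨hfb, hbe, heb, hbf⟩ := corner b hb
    have heg : e * (e + b) = e := by rw [mul_add, he, heb, add_zero]
    have h1 := hΔ e (e + b)
    rw [heg, hΔe, mul_zero, add_zero, hes] at h1
    -- h1 : 0 = Δ (e+b) * e
    have hge : Δ (e + b) * (1 - e) = Δ (e + b) := by
      rw [mul_sub, mul_one, ← h1, sub_zero]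
    have hgb : Δ b * (1 - e) = Δ b := hDrf b hfb
    have stepL : ∀ c : R, c * (1 - e) = c → (Δ (e + b) - Δ b) * σ c = 0 := by
      intro c hc
      have hce : c * e = 0 := by
        rw [← hc, mul_assoc, hfe, mul_zero]
      have hcg : c * (e + b) = c * b := by rw [mul_add, hce, zero_add]
      have hΔc : (1 - e) * Δ c = Δ c := hDlf c hc
      have heΔc : e * Δ c = 0 := by
        have h := hΔc
        rw [sub_mul, one_mul] at h
        exact sub_eq_self.mp h
      have hmid : Δ (c * b) = Δ (e + b) * σ c + σ b * Δ c := by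
        have h := hΔ c (e + b)
        rw [hcg, hσadd, hes, add_mul, heΔc, zero_add] at h
        exact h
      have h2 := hΔ c b
      have h3 : Δ (e + b) * σ c + σ b * Δ c = Δ b * σ c + σ b * Δ c :=
        hmid.symm.trans h2
      have h4 := add_right_cancel h3
      rw [sub_mul, h4, sub_self]
    have hU : (Δ (e + b) - Δ b) * (1 - e) = Δ (e + b) - Δ b := by
      rw [sub_mul, hge, hgb]
    have hrU : ∀ r : R, (Δ (e + b) - Δ b) * r = 0 := by
      intro r
      have ht : σ ((1 - e) * r) * (1 - e) = σ ((1 - e) * r) := by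
        have h := hσmul (1 - e) ((1 - e) * r)
        rw [← mul_assoc, hff, hσf] at h
        exact h.symm
      have h5 := stepL (σ ((1 - e) * r)) ht
      rw [hσinv] at h5
      calc (Δ (e + b) - Δ b) * r
          = ((Δ (e + b) - Δ b) * (1 - e)) * r := by rw [hU]
        _ = (Δ (e + b) - Δ b) * ((1 - e) * r) := by rw [mul_assoc]
        _ = 0 := h5
    have h6 := hM1 _ hrU
    exact sub_eq_zero.mp h6
  -- Lemma A : additivity on R21
  have lemA : ∀ a b : R, a = (1 - e) * a * e → b = (1 - e) * b * e →
      Δ (a + b) = Δ a + Δ b := by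
    intro a b ha hb
    obtain ⟨hfa, hae, hea, haf⟩ := corner a ha
    obtain ⟨hfb, hbe, heb, hbf⟩ := corner b hb
    have hab0 : a * b = 0 := by
      rw [← hfb, ← mul_assoc, haf, zero_mul]
    have hprod : ((1 - e) + a) * (e + b) = a + b := by
      rw [add_mul, mul_add, mul_add, hfe, hfb, hae, hab0, zero_add, add_zero, add_comm]
    have h := hΔ ((1 - e) + a) (e + b)
    rw [hprod, lemB b hb, lemB' a ha, hσadd (1 - e) a, hσf, hσadd e b, hes,
      mul_add, add_mul] at h
    -- h : Δ(a+b) = (Δb*(1-e) + Δb*σa) + (e*Δa + σb*Δa)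
    have hb1 : Δ b * (1 - e) = Δ b := hDrf b hfb
    have hbe0 : Δ b * e = 0 := by
      have h' := hb1
      rw [mul_sub, mul_one] at h'
      exact sub_eq_self.mp h'
    have hσa : σ a = e * σ a := by
      conv_lhs => rw [← hae]
      rw [hσmul, hes]
    have hb2 : Δ b * σ a = 0 := by
      calc Δ b * σ a = Δ b * (e * σ a) := by rw [← hσa]
        _ = (Δ b * e) * σ a := by rw [mul_assoc]
        _ = 0 := by rw [hbe0, zero_mul]
    have ha1 : e * Δ a = Δ a := hDle a hae
    have hsb : σ b * e = 0 := by
      have h' := congrArg σ heb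
      rw [hσmul, hes, hσ0] at h'
      exact h'
    have ha2 : σ b * Δ a = 0 := by
      calc σ b * Δ a = σ b * (e * Δ a) := by rw [ha1]
        _ = (σ b * e) * Δ a := by rw [mul_assoc]
        _ = 0 := by rw [hsb, zero_mul]
    rw [hb1, hb2, ha1, ha2, add_zero, add_zero] at h
    rw [h, add_comm]
  -- corner facts for x, y
  have hex : e * x = x := by
    rw [hx]
    calc e * (e * x * e) = (e * e) * x * e := by noncomm_ring
      _ = e * x * e := by rw [he]
  have hxe : x * e = x := by
    rw [hx]
    calc (e * x * e) * e = e * x * (e * e) := by noncomm_ring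
      _ = e * x * e := by rw [he]
  have hey : e * y = y := by
    rw [hy]
    calc e * (e * y * e) = (e * e) * y * e := by noncomm_ring
      _ = e * y * e := by rw [he]
  have hye : y * e = y := by
    rw [hy]
    calc (e * y * e) * e = e * y * (e * e) := by noncomm_ring
      _ = e * y * e := by rw [he]
  -- key step : T * σ c = 0 for c ∈ R21
  have step : ∀ c : R, c = (1 - e) * c * e →
      (Δ (x + y) - Δ x - Δ y) * σ c = 0 := by
    intro c hc
    obtain ⟨hfc, hce, hec, hcf⟩ := corner c hc
    have hcx : c * x = (1 - e) * (c * x) * e := by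
      calc c * x = ((1 - e) * c) * (x * e) := by rw [hfc, hxe]
        _ = (1 - e) * (c * x) * e := by noncomm_ring
    have hcy : c * y = (1 - e) * (c * y) * e := by
      calc c * y = ((1 - e) * c) * (y * e) := by rw [hfc, hye]
        _ = (1 - e) * (c * y) * e := by noncomm_ring
    have hmid : Δ (c * x) + Δ (c * y) = Δ (x + y) * σ c + σ (x + y) * Δ c := by
      rw [← lemA (c * x) (c * y) hcx hcy, ← mul_add]
      exact hΔ c (x + y)
    have hmid2 : (Δ x * σ c + σ x * Δ c) + (Δ y * σ c + σ y * Δ c)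
        = Δ (x + y) * σ c + (σ x + σ y) * Δ c := by
      rw [← hΔ c x, ← hΔ c y, ← hσadd]
      exact hmid
    have hA : Δ (x + y) * σ c = Δ x * σ c + Δ y * σ c := by
      have h := hmid2
      rw [add_mul] at h
      calc Δ (x + y) * σ c
          = (Δ (x + y) * σ c + (σ x * Δ c + σ y * Δ c)) - (σ x * Δ c + σ y * Δ c) := by
            abel
        _ = ((Δ x * σ c + σ x * Δ c) + (Δ y * σ c + σ y * Δ c))
            - (σ x * Δ c + σ y * Δ c) := by rw [← h]
        _ = Δ x * σ c + Δ y * σ c := by abel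
    rw [sub_mul, sub_mul, hA]
    abel
  -- conclude via M3
  have hexy : e * (x + y) = x + y := by rw [mul_add, hex, hey]
  have hxye : (x + y) * e = x + y := by rw [add_mul, hxe, hye]
  have hTe : (Δ (x + y) - Δ x - Δ y) * e = Δ (x + y) - Δ x - Δ y := by
    rw [sub_mul, sub_mul, hDre (x + y) hexy, hDre x hex, hDre y hey]
  have heT : e * (Δ (x + y) - Δ x - Δ y) = Δ (x + y) - Δ x - Δ y := by
    rw [mul_sub, mul_sub, hDle (x + y) hxye, hDle x hxe, hDle y hye]
  have hM3in : ∀ r : R, e * (Δ (x + y) - Δ x - Δ y) * e * r * (1 - e) = 0 := by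
    intro r
    have hcr : (1 - e) * (σ r) * e = (1 - e) * ((1 - e) * (σ r) * e) * e := by
      calc (1 - e) * (σ r) * e
          = ((1 - e) * (1 - e)) * (σ r) * (e * e) := by rw [hff, he]
        _ = (1 - e) * ((1 - e) * (σ r) * e) * e := by noncomm_ring
    have h5 := step ((1 - e) * (σ r) * e) hcr
    have hs : σ ((1 - e) * (σ r) * e) = e * r * (1 - e) := by
      rw [hσmul, hσmul, hσinv, hes, hσf]
      noncomm_ring
    rw [hs] at h5
    rw [heT, hTe]
    calc (Δ (x + y) - Δ x - Δ y) * r * (1 - e)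
        = ((Δ (x + y) - Δ x - Δ y) * e) * r * (1 - e) := by rw [hTe]
      _ = (Δ (x + y) - Δ x - Δ y) * (e * r * (1 - e)) := by noncomm_ring
      _ = 0 := h5
  have h7 := hM3 (Δ (x + y) - Δ x - Δ y) hM3in
  rw [heT, hTe] at h7
  have h8 : Δ (x + y) - (Δ x + Δ y) = 0 := by rw [← sub_sub]; exact h7
  exact sub_eq_zero.mp h8
end

section
/- Let R be a unital ring with involution * containing a nontrivial symmetric idempotent e, satisfying: (M1) xR = 0 implies x = 0, and (M3) exe·R·(1−e) = 0 implies exe = 0. Let Δ : R → R be a *-reverse derivable map with Δ(e) = 0. Then Δ is additive on Re: for all a, b ∈ Re (i.e. a = ae, b = be), Δ(a + b) = Δ(a) + Δ(b). -/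
theorem delta_additive_on_Re {R : Type*} [Ring R]
    (σ : R → R)
    (hσadd : ∀ x y : R, σ (x + y) = σ x + σ y)
    (hσinv : ∀ x : R, σ (σ x) = x)
    (hσmul : ∀ x y : R, σ (x * y) = σ y * σ x)
    (e : R) (he : e * e = e) (hes : σ e = e) (he0 : e ≠ 0) (he1 : e ≠ 1)
    (hM1 : ∀ x : R, (∀ r : R, x * r = 0) → x = 0)
    (hM3 : ∀ x : R, (∀ r : R, e * x * e * r * (1 - e) = 0) → e * x * e = 0)
    (Δ : R → R)
    (hΔ : ∀ a b : R, Δ (a * b) = Δ b * σ a + σ b * Δ a)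
    (hΔe : Δ e = 0) :
    ∀ a b : R, a = a * e → b = b * e → Δ (a + b) = Δ a + Δ b := by
  -- basic facts about σ
  have hσ0 : σ 0 = 0 := by
    have h := hσadd 0 0
    rw [add_zero] at h
    exact left_eq_add.mp h
  have hσ1 : σ 1 = 1 := by
    have h1 : ∀ x : R, σ x = σ 1 * σ x := by
      intro x
      conv_lhs => rw [← mul_one x, hσmul]
    have h := h1 (σ 1)
    rw [hσinv, mul_one] at h
    exact h.symm
  have hσ1e : σ (1 - e) = 1 - e := by
    have h := hσadd (1 - e) e
    rw [sub_add_cancel, hσ1, hes] at h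
    exact eq_sub_of_add_eq h.symm
  have hΔ0 : Δ 0 = 0 := by
    have h := hΔ 0 0
    rw [mul_zero, hσ0, mul_zero, zero_mul, add_zero] at h
    exact h
  have hee1 : e * (1 - e) = 0 := by rw [mul_sub, mul_one, he, sub_self]
  have hee2 : (1 - e) * e = 0 := by rw [sub_mul, one_mul, he, sub_self]
  have hΔ1e : Δ (1 - e) = 0 := by
    have hde : Δ (1 - e) * e = 0 := by
      have h := hΔ e (1 - e)
      rw [hee1, hΔ0, hes, hσ1e, hΔe, mul_zero, add_zero] at h
      exact h.symm
    have hed : e * Δ (1 - e) = 0 := by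
      have h := hΔ (1 - e) e
      rw [hee2, hΔ0, hΔe, zero_mul, hes, zero_add] at h
      exact h.symm
    have h3 : (1 - e) * (1 - e) = 1 - e := by
      rw [mul_sub, mul_one, hee2, sub_zero]
    have h := hΔ (1 - e) (1 - e)
    rw [h3, hσ1e, mul_sub, mul_one, hde, sub_zero, sub_mul, one_mul, hed, sub_zero] at h
    exact (left_eq_add.mp h)
  -- L1 : split rows additivity
  have L1 : ∀ u v : R, e * u = u → e * v = 0 → Δ (u + v) = Δ u + Δ v := by
    intro u v hu hv
    have h1 : e * (u + v) = u := by rw [mul_add, hu, hv, add_zero]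
    have h2 : (1 - e) * (u + v) = v := by
      rw [sub_mul, one_mul, h1, add_sub_cancel_left]
    have e1 : Δ u = Δ (u + v) * e := by
      have h := hΔ e (u + v)
      rw [h1, hes, hΔe, mul_zero, add_zero] at h
      exact h
    have e2 : Δ v = Δ (u + v) * (1 - e) := by
      have h := hΔ (1 - e) (u + v)
      rw [h2, hσ1e, hΔ1e, mul_zero, add_zero] at h
      exact h
    rw [e1, e2, ← mul_add, add_sub_cancel, mul_one]
  -- L1' : split columns additivity
  have L1' : ∀ u v : R, u * e = u → v * e = 0 → Δ (u + v) = Δ u + Δ v := by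
    intro u v hu hv
    have h1 : (u + v) * e = u := by rw [add_mul, hu, hv, add_zero]
    have h2 : (u + v) * (1 - e) = v := by
      rw [mul_sub, mul_one, h1, add_sub_cancel_left]
    have e1 : Δ u = e * Δ (u + v) := by
      have h := hΔ (u + v) e
      rw [h1, hΔe, zero_mul, hes, zero_add] at h
      exact h
    have e2 : Δ v = (1 - e) * Δ (u + v) := by
      have h := hΔ (u + v) (1 - e)
      rw [h2, hΔ1e, zero_mul, hσ1e, zero_add] at h
      exact h
    rw [e1, e2, ← add_mul, add_sub_cancel, one_mul]
  -- helper facts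
  have fact1 : ∀ c : R, c * e = c → e * Δ c = Δ c := by
    intro c hc
    have h := hΔ c e
    rw [hc, hΔe, zero_mul, hes, zero_add] at h
    exact h.symm
  have fact2 : ∀ c : R, e * c = c → Δ c * e = Δ c := by
    intro c hc
    have h := hΔ e c
    rw [hc, hes, hΔe, mul_zero, add_zero] at h
    exact h.symm
  have fact3 : ∀ c : R, e * c = 0 → Δ c * e = 0 := by
    intro c hc
    have h := hΔ e c
    rw [hc, hΔ0, hes, hΔe, mul_zero, add_zero] at h
    exact h.symm
  have fact4 : ∀ c : R, c * e = c → σ c = e * σ c := by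
    intro c hc
    conv_lhs => rw [← hc, hσmul, hes]
  have fact5 : ∀ c : R, e * c = 0 → σ c * e = 0 := by
    intro c hc
    have h := hσmul e c
    rw [hc, hσ0, hes] at h
    exact h.symm
  -- L3 : additivity on (1-e)Re
  have L3 : ∀ u v : R, u * e = u → e * u = 0 → v * e = v → e * v = 0 →
      Δ (u + v) = Δ u + Δ v := by
    intro u v hu1 hu2 hv1 hv2
    have huv : u * v = 0 := by rw [← hu1, mul_assoc, hv2, mul_zero]
    have h2 : (1 - e) * v = v := by rw [sub_mul, one_mul, hv2, sub_zero]
    have key : (u + (1 - e)) * (e + v) = u + v := by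
      rw [add_mul, mul_add, mul_add, hu1, huv, add_zero, hee2, h2, zero_add]
    have hu' : Δ (u + (1 - e)) = Δ u := by
      rw [L1' u (1 - e) hu1 hee2, hΔ1e, add_zero]
    have hv' : Δ (e + v) = Δ v := by
      rw [L1 e v he hv2, hΔe, zero_add]
    have h := hΔ (u + (1 - e)) (e + v)
    rw [key, hu', hv', hσadd, hσ1e, hσadd, hes] at h
    have t1 : Δ v * σ u = 0 := by
      rw [fact4 u hu1, ← mul_assoc, fact3 v hv2, zero_mul]
    have t2 : Δ v * (1 - e) = Δ v := by
      rw [mul_sub, mul_one, fact3 v hv2, sub_zero]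
    have t3 : e * Δ u = Δ u := fact1 u hu1
    have t4 : σ v * Δ u = 0 := by
      rw [← fact1 u hu1, ← mul_assoc, fact5 v hv2, zero_mul]
    rw [mul_add, t1, zero_add, t2, add_mul, t3, t4, add_zero] at h
    rw [h, add_comm]
  -- L2 : additivity on eRe, uses L3 and hM3
  have L2 : ∀ u v : R, e * u = u → u * e = u → e * v = v → v * e = v →
      Δ (u + v) = Δ u + Δ v := by
    intro u v hu1 hu2 hv1 hv2
    have huv1 : e * (u + v) = u + v := by rw [mul_add, hu1, hv1]
    have huv2 : (u + v) * e = u + v := by rw [add_mul, hu2, hv2]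
    have h1 : e * (Δ (u + v) - Δ u - Δ v) = Δ (u + v) - Δ u - Δ v := by
      rw [mul_sub, mul_sub, fact1 u hu2, fact1 v hv2, fact1 _ huv2]
    have h2 : (Δ (u + v) - Δ u - Δ v) * e = Δ (u + v) - Δ u - Δ v := by
      rw [sub_mul, sub_mul, fact2 u hu1, fact2 v hv1, fact2 _ huv1]
    have step3 : ∀ r : R, (Δ (u + v) - Δ u - Δ v) * (r * (1 - e)) = 0 := by
      intro r
      have hey0 : e * ((1 - e) * σ r) = 0 := by rw [← mul_assoc, hee1, zero_mul]
      have hy1 : ((1 - e) * σ r * u) * e = (1 - e) * σ r * u := by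
        rw [mul_assoc _ u e, hu2]
      have hy2 : e * ((1 - e) * σ r * u) = 0 := by
        rw [← mul_assoc, hey0, zero_mul]
      have hy3 : ((1 - e) * σ r * v) * e = (1 - e) * σ r * v := by
        rw [mul_assoc _ v e, hv2]
      have hy4 : e * ((1 - e) * σ r * v) = 0 := by
        rw [← mul_assoc, hey0, zero_mul]
      have hL3 := L3 _ _ hy1 hy2 hy3 hy4
      have hdist : (1 - e) * σ r * (u + v) = (1 - e) * σ r * u + (1 - e) * σ r * v :=
        mul_add _ u v
      have E1 := hΔ ((1 - e) * σ r) (u + v)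
      have E2 := hΔ ((1 - e) * σ r) u
      have E3 := hΔ ((1 - e) * σ r) v
      rw [hdist, hL3, E2, E3, hσadd] at E1
      have hσy : σ ((1 - e) * σ r) = r * (1 - e) := by
        rw [hσmul, hσinv, hσ1e]
      have key : (Δ (u + v) - Δ u - Δ v) * σ ((1 - e) * σ r) = 0 := by
        linear_combination (norm := noncomm_ring) -E1
      rw [hσy] at key
      exact key
    have hG0 : e * (Δ (u + v) - Δ u - Δ v) * e = 0 := by
      apply hM3
      intro r
      rw [h1, h2, mul_assoc]
      exact step3 r
    rw [h1, h2] at hG0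
    rw [sub_sub, sub_eq_zero] at hG0
    exact hG0
  -- main assembly
  intro a b ha hb
  have hae : a * e = a := ha.symm
  have hbe : b * e = b := hb.symm
  have ha11 : e * (e * a) = e * a := by rw [← mul_assoc, he]
  have ha12 : (e * a) * e = e * a := by rw [mul_assoc, hae]
  have ha21 : e * (a - e * a) = 0 := by rw [mul_sub, ← mul_assoc, he, sub_self]
  have ha22 : (a - e * a) * e = a - e * a := by rw [sub_mul, hae, mul_assoc, hae]
  have hb11 : e * (e * b) = e * b := by rw [← mul_assoc, he]
  have hb12 : (e * b) * e = e * b := by rw [mul_assoc, hbe]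
  have hb21 : e * (b - e * b) = 0 := by rw [mul_sub, ← mul_assoc, he, sub_self]
  have hb22 : (b - e * b) * e = b - e * b := by rw [sub_mul, hbe, mul_assoc, hbe]
  have hrow1 : e * (e * a + e * b) = e * a + e * b := by
    rw [mul_add, ha11, hb11]
  have hrow2 : e * ((a - e * a) + (b - e * b)) = 0 := by
    rw [mul_add, ha21, hb21, add_zero]
  have H1 : Δ (a + b) = Δ (e * a + e * b) + Δ ((a - e * a) + (b - e * b)) := by
    have h := L1 _ _ hrow1 hrow2
    rw [← h]
    congr 1
    abel
  have H2 : Δ (e * a + e * b) = Δ (e * a) + Δ (e * b) := L2 _ _ ha11 ha12 hb11 hb12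
  have H3 : Δ ((a - e * a) + (b - e * b)) = Δ (a - e * a) + Δ (b - e * b) :=
    L3 _ _ ha22 ha21 hb22 hb21
  have H4 : Δ a = Δ (e * a) + Δ (a - e * a) := by
    have h := L1 _ _ ha11 ha21
    rw [← h, add_sub_cancel]
  have H5 : Δ b = Δ (e * b) + Δ (b - e * b) := by
    have h := L1 _ _ hb11 hb21
    rw [← h, add_sub_cancel]
  rw [H1, H2, H3, H4, H5]
  abel
end

section
/- Let R be a prime unital ring with involution * containing a nontrivial symmetric idempotent e. Then every *-reverse derivable map δ : R → R is additive. -/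
theorem star_reverse_derivable_map_additive_of_prime {R : Type*} [Ring R]
    (hprime : ∀ a b : R, (∀ r : R, a * r * b = 0) → a = 0 ∨ b = 0)
    (σ : R → R)
    (hσadd : ∀ x y : R, σ (x + y) = σ x + σ y)
    (hσinv : ∀ x : R, σ (σ x) = x)
    (hσmul : ∀ x y : R, σ (x * y) = σ y * σ x)
    (e : R) (he : e * e = e) (hes : σ e = e) (he0 : e ≠ 0) (he1 : e ≠ 1)
    (δ : R → R)
    (hδ : ∀ a b : R, δ (a * b) = δ b * σ a + σ b * δ a) :
    ∀ x y : R, δ (x + y) = δ x + δ y := by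
  obtain ⟨d, hd_def⟩ : ∃ d : R → R, ∀ z, d z = δ (σ z) := ⟨_, fun _ => rfl⟩
  obtain ⟨f, hf⟩ : ∃ f : R, f = 1 - e := ⟨_, rfl⟩
  have hsum : e + f = 1 := by rw [hf]; abel
  have hef : e * f = 0 := by rw [hf, mul_sub, mul_one, he, sub_self]
  have hfe : f * e = 0 := by rw [hf, sub_mul, one_mul, he, sub_self]
  have hff : f * f = f := by
    rw [hf, mul_sub, mul_one, sub_mul, one_mul, he, sub_self, sub_zero]
  have h1 : (1 : R) ≠ 0 := fun h => he0 (by rw [← mul_one e, h, mul_zero])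
  have hf0 : f ≠ 0 := by
    rw [hf]; intro h; exact he1 (sub_eq_zero.mp h).symm
  have hP1 : ∀ s : R, (∀ r : R, s * r = 0) → s = 0 := by
    intro s h
    rcases hprime s 1 (fun r => by rw [mul_one]; exact h r) with h' | h'
    · exact h'
    · exact absurd h' h1
  have hP2 : ∀ s : R, (∀ r : R, r * s = 0) → s = 0 := by
    intro s h
    rcases hprime 1 s (fun r => by rw [one_mul]; exact h r) with h' | h'
    · exact absurd h' h1
    · exact h'
  have hPe : ∀ s : R, (∀ r : R, s * (r * e) = 0) → s = 0 := by
    intro s h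
    rcases hprime s e (fun r => by rw [mul_assoc]; exact h r) with h' | h'
    · exact h'
    · exact absurd h' he0
  have hPf : ∀ s : R, (∀ r : R, s * (r * f) = 0) → s = 0 := by
    intro s h
    rcases hprime s f (fun r => by rw [mul_assoc]; exact h r) with h' | h'
    · exact h'
    · exact absurd h' hf0
  have hσ0 : σ 0 = 0 := by
    have h := hσadd 0 0
    rw [add_zero] at h
    exact right_eq_add.mp h
  have hδ0 : δ 0 = 0 := by
    have h := hδ 0 0
    rw [mul_zero, hσ0, mul_zero, zero_mul, add_zero] at h
    exact h
  have hd0 : d 0 = 0 := by rw [hd_def, hσ0, hδ0]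
  have hd : ∀ a b : R, d (a * b) = d a * b + a * d b := by
    intro a b
    simp only [hd_def]
    rw [hσmul, hδ (σ b) (σ a), hσinv, hσinv]
  have hz : ∀ u v : R, u * v = 0 → d u * v + u * d v = 0 := by
    intro u v h
    have h2 := hd u v
    rw [h, hd0] at h2
    exact h2.symm
  have hfe0 : ∀ u v : R, (u * f) * (e * v) = 0 := by
    intro u v
    rw [mul_assoc, ← mul_assoc f e v, hfe, zero_mul, mul_zero]
  have hef0 : ∀ u v : R, (u * e) * (f * v) = 0 := by
    intro u v
    rw [mul_assoc, ← mul_assoc e f v, hef, zero_mul, mul_zero]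
  -- key cancellation lemmas
  have keyL : ∀ x y r' : R, r' * y = 0 → r' * (d (x + y) - d x - d y) = 0 := by
    intro x y r' h
    have h3 : r' * (x + y) = r' * x := by rw [mul_add, h, add_zero]
    have a1 := hd r' (x + y)
    rw [h3, hd r' x] at a1
    have E2 := hz r' y h
    linear_combination (norm := noncomm_ring) (-a1 - E2)
  have keyR : ∀ x y r' : R, y * r' = 0 → (d (x + y) - d x - d y) * r' = 0 := by
    intro x y r' h
    have h3 : (x + y) * r' = x * r' := by rw [add_mul, h, add_zero]
    have a1 := hd (x + y) r'
    rw [h3, hd x r'] at a1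
    have E2 := hz y r' h
    linear_combination (norm := noncomm_ring) (-a1 - E2)
  have LA : ∀ x y : R, e * y = 0 → f * x = 0 → d (x + y) = d x + d y := by
    intro x y hey hfx
    have key : ∀ r : R, r * (d (x + y) - d x - d y) = 0 := by
      intro r
      have k1 := keyL x y (r * e) (by rw [mul_assoc, hey, mul_zero])
      have k2 := keyL y x (r * f) (by rw [mul_assoc, hfx, mul_zero])
      rw [add_comm y x, sub_right_comm] at k2
      calc r * (d (x + y) - d x - d y)
          = (r * e + r * f) * (d (x + y) - d x - d y) := by
            rw [← mul_add, hsum, mul_one]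
        _ = (r * e) * (d (x + y) - d x - d y)
              + (r * f) * (d (x + y) - d x - d y) := add_mul _ _ _
        _ = 0 := by rw [k1, k2, add_zero]
    have hs := hP2 _ key
    rw [sub_sub, sub_eq_zero] at hs
    exact hs
  have LB : ∀ x y : R, y * e = 0 → x * f = 0 → d (x + y) = d x + d y := by
    intro x y hye hxf
    have key : ∀ r : R, (d (x + y) - d x - d y) * r = 0 := by
      intro r
      have k1 := keyR x y (e * r) (by rw [← mul_assoc, hye, zero_mul])
      have k2 := keyR y x (f * r) (by rw [← mul_assoc, hxf, zero_mul])
      rw [add_comm y x, sub_right_comm] at k2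
      calc (d (x + y) - d x - d y) * r
          = (d (x + y) - d x - d y) * (e * r + f * r) := by
            rw [← add_mul, hsum, one_mul]
        _ = (d (x + y) - d x - d y) * (e * r)
              + (d (x + y) - d x - d y) * (f * r) := mul_add _ _ _
        _ = 0 := by rw [k1, k2, add_zero]
    have hs := hP1 _ key
    rw [sub_sub, sub_eq_zero] at hs
    exact hs
  -- generic additivity for sums inside R12 (resp. R21)
  have Cgen : ∀ A B : R, e * A = A → f * A = 0 → B * f = B → B * e = 0 →
      B * A = 0 → d (A + B) = d A + d B := by
    intro A B heA hfA hBf hBe hBA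
    have dsum1 : d (e + B) = d e + d B := LB e B hBe hef
    have dsum2 : d (f + A) = d f + d A := by
      have h := LA A f hef hfA
      rw [add_comm A f] at h
      rw [h]
      exact add_comm (d A) (d f)
    have hfact : (e + B) * (f + A) = A + B := by
      rw [add_mul, mul_add, mul_add, hef, heA, hBf, hBA]
      abel
    have main := hd (e + B) (f + A)
    rw [hfact, dsum1, dsum2] at main
    have p1 := hz e f hef
    have p2 := hd e A
    rw [heA] at p2
    have p3 := hd B f
    rw [hBf] at p3
    have p4 := hz B A hBA
    rw [main]
    linear_combination (norm := noncomm_ring) (p1 - p2 - p3 + p4)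
  have Cgen' : ∀ A B : R, A * e = A → A * f = 0 → e * B = 0 → f * B = B →
      A * B = 0 → d (A + B) = d A + d B := by
    intro A B hAe hAf heB hfB hAB
    have dsum1 : d (f + A) = d f + d A := by
      have h := LB A f hfe hAf
      rw [add_comm A f] at h
      rw [h]
      exact add_comm (d A) (d f)
    have dsum2 : d (e + B) = d e + d B := LA e B heB hfe
    have hfact : (f + A) * (e + B) = A + B := by
      rw [add_mul, mul_add, mul_add, hfe, hfB, hAe, hAB]
      abel
    have main := hd (f + A) (e + B)
    rw [hfact, dsum1, dsum2] at main
    have p1 := hz f e hfe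
    have p2 := hd A e
    rw [hAe] at p2
    have p3 := hd f B
    rw [hfB] at p3
    have p4 := hz A B hAB
    rw [main]
    linear_combination (norm := noncomm_ring) (p1 - p2 - p3 + p4)
  have C12 : ∀ a b : R, d (e*a*f + e*b*f) = d (e*a*f) + d (e*b*f) := by
    intro a b
    apply Cgen
    · rw [← mul_assoc, ← mul_assoc, he]
    · rw [← mul_assoc, ← mul_assoc, hfe, zero_mul, zero_mul]
    · rw [mul_assoc, hff]
    · rw [mul_assoc, hfe, mul_zero]
    · have h' : (e*b*f) * (e*a*f) = ((e*b)*f) * (e*(a*f)) := by noncomm_ring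
      rw [h', hfe0]
  have C21 : ∀ a b : R, d (f*a*e + f*b*e) = d (f*a*e) + d (f*b*e) := by
    intro a b
    apply Cgen'
    · rw [mul_assoc, he]
    · rw [mul_assoc, hef, mul_zero]
    · rw [← mul_assoc, ← mul_assoc, hef, zero_mul, zero_mul]
    · rw [← mul_assoc, ← mul_assoc, hff]
    · have h' : (f*a*e) * (f*b*e) = ((f*a)*e) * (f*(b*e)) := by noncomm_ring
      rw [h', hef0]
  have C11 : ∀ a b : R, d (e*a*e + e*b*e) = d (e*a*e) + d (e*b*e) := by
    intro a b
    have key : ∀ r : R, (d (e*a*e + e*b*e) - d (e*a*e) - d (e*b*e)) * (r * f) = 0 := by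
      intro r
      have hA : (e*a*e) * (r*f) = e*(a*(e*r))*f := by noncomm_ring
      have hB : (e*b*e) * (r*f) = e*(b*(e*r))*f := by noncomm_ring
      have hU : (e*a*e + e*b*e) * (r*f) = e*(a*(e*r))*f + e*(b*(e*r))*f := by
        rw [add_mul, hA, hB]
      have main := hd (e*a*e + e*b*e) (r*f)
      rw [hU, C12 (a*(e*r)) (b*(e*r)), ← hA, ← hB,
        hd (e*a*e) (r*f), hd (e*b*e) (r*f)] at main
      linear_combination (norm := noncomm_ring) (-main)
    have hs := hPf _ key
    rw [sub_sub, sub_eq_zero] at hs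
    exact hs
  have C22 : ∀ a b : R, d (f*a*f + f*b*f) = d (f*a*f) + d (f*b*f) := by
    intro a b
    have key : ∀ r : R, (d (f*a*f + f*b*f) - d (f*a*f) - d (f*b*f)) * (r * e) = 0 := by
      intro r
      have hA : (f*a*f) * (r*e) = f*(a*(f*r))*e := by noncomm_ring
      have hB : (f*b*f) * (r*e) = f*(b*(f*r))*e := by noncomm_ring
      have hU : (f*a*f + f*b*f) * (r*e) = f*(a*(f*r))*e + f*(b*(f*r))*e := by
        rw [add_mul, hA, hB]
      have main := hd (f*a*f + f*b*f) (r*e)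
      rw [hU, C21 (a*(f*r)) (b*(f*r)), ← hA, ← hB,
        hd (f*a*f) (r*e), hd (f*b*f) (r*e)] at main
      linear_combination (norm := noncomm_ring) (-main)
    have hs := hPe _ key
    rw [sub_sub, sub_eq_zero] at hs
    exact hs
  have Ldec : ∀ z : R, d z = d (e*z*e) + d (e*z*f) + d (f*z*e) + d (f*z*f) := by
    intro z
    have h1 : d z = d (e*z) + d (f*z) := by
      have h := LA (e*z) (f*z) (by rw [← mul_assoc, hef, zero_mul])
        (by rw [← mul_assoc, hfe, zero_mul])
      calc d z = d (e*z + f*z) := by rw [← add_mul, hsum, one_mul]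
        _ = d (e*z) + d (f*z) := h
    have h2 : d (e*z) = d (e*z*e) + d (e*z*f) := by
      have h := LB (e*z*e) (e*z*f) (by rw [mul_assoc, hfe, mul_zero])
        (by rw [mul_assoc, hef, mul_zero])
      calc d (e*z) = d (e*z*e + e*z*f) := by rw [← mul_add, hsum, mul_one]
        _ = _ := h
    have h3 : d (f*z) = d (f*z*e) + d (f*z*f) := by
      have h := LB (f*z*e) (f*z*f) (by rw [mul_assoc, hfe, mul_zero])
        (by rw [mul_assoc, hef, mul_zero])
      calc d (f*z) = d (f*z*e + f*z*f) := by rw [← mul_add, hsum, mul_one]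
        _ = _ := h
    rw [h1, h2, h3]
    abel
  have dadd : ∀ u v : R, d (u + v) = d u + d v := by
    intro u v
    have g11 : e*(u+v)*e = e*u*e + e*v*e := by noncomm_ring
    have g12 : e*(u+v)*f = e*u*f + e*v*f := by noncomm_ring
    have g21 : f*(u+v)*e = f*u*e + f*v*e := by noncomm_ring
    have g22 : f*(u+v)*f = f*u*f + f*v*f := by noncomm_ring
    rw [Ldec (u+v), g11, g12, g21, g22, C11 u v, C12 u v, C21 u v, C22 u v,
      Ldec u, Ldec v]
    abel
  have hdel : ∀ z : R, δ z = d (σ z) := by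
    intro z; rw [hd_def, hσinv]
  intro x y
  rw [hdel, hdel, hdel, hσadd, dadd]
end
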